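/- Let C be a smooth projective connected curve of genus g over the complex numbers, let i ≥ 0 be an integer and P a point of C. Let V = H^0(C, ω_C((i+1)P)) be the complete linear system of sections of ω_C((i+1)P). Then the weight of P as a ramification point of V equals g + wt(P), where wt(P) is the Weierstrass weight of P, i.e. the weight of P in the canonical linear system H^0(C, ω_C). -/

import Mathlib

/-!
Abstract interface for the geometry of a smooth projective connected curve
over `ℂ`, following Cumino–Esteves–Gatto, "Special ramification loci on the
double product of a general curve".
-/

open scoped BigOperators

noncomputable section

/-- Abstract model of a smooth projective connected curve over `ℂ`:
it records the (infinitely many) closed points of the curve, its genus, a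
canonical divisor `K` (a divisor of the canonical line bundle `ω_C`), and the
function `h0` assigning to every divisor `D` — a finitely supported `ℤ`-valued
function on points — the dimension `h⁰(C, 𝒪_C(D))` of the space of global
sections of the associated line bundle.  The axioms are standard facts valid
on any smooth projective connected curve: `h⁰(𝒪_C) = 1`, `h⁰(ω_C) = g`, `h⁰`
vanishes for divisors of negative degree, adding a point to a divisor changes
`h⁰` by `0` or `1`, and the Riemann–Roch theorem. -/
structure SmoothProjCurve where
  /-- the closed points of the curve -/
  Point : Type
  /-- a curve over `ℂ` has infinitely many points -/
  [infinitePoint : Infinite Point]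
  /-- the genus `g = h⁰(C, ω_C)` -/
  genus : ℕ
  /-- `h0 D = h⁰(C, 𝒪_C(D))` -/
  h0 : (Point →₀ ℤ) → ℕ
  /-- a canonical divisor, i.e. the divisor of a nonzero rational section of `ω_C` -/
  K : Point →₀ ℤ
  h0_trivial : h0 0 = 1
  h0_canonical : h0 K = genus
  h0_of_neg : ∀ D : Point →₀ ℤ, (D.sum fun _ n => n) < 0 → h0 D = 0
  h0_mono : ∀ (D : Point →₀ ℤ) (P : Point), h0 D ≤ h0 (D + Finsupp.single P 1)
  h0_step : ∀ (D : Point →₀ ℤ) (P : Point), h0 (D + Finsupp.single P 1) ≤ h0 D + 1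
  /-- the Riemann–Roch theorem: `h⁰(D) - h⁰(K - D) = deg D + 1 - g` -/
  riemann_roch : ∀ D : Point →₀ ℤ,
    (h0 D : ℤ) - (h0 (K - D) : ℤ) = (D.sum fun _ n => n) + 1 - (genus : ℤ)

attribute [instance] SmoothProjCurve.infinitePoint

namespace SmoothProjCurve

variable (C : SmoothProjCurve)

/-- The divisor `1 ⬝ P`. -/
def pt (P : C.Point) : C.Point →₀ ℤ := Finsupp.single P 1

/-- The degree of a divisor. -/
def deg (D : C.Point →₀ ℤ) : ℤ := D.sum fun _ n => n

/-- The weight `wt_{|D|}(Q) = Σ_{k=0}^{r} (ε_k(|D|,Q) - k)` of a point `Q` in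
the complete linear system `|D| = H⁰(C, 𝒪_C(D))`, of rank `r = h⁰(D) - 1`;
equivalently, the order of vanishing at `Q` of the Wronskian of `|D|`.  It is
computed by the standard formula `wt = (Σ_{j ≥ 1} dim |D|(-jQ)) - r(r+1)/2`,
where `|D|(-jQ)` is the subspace of sections vanishing to order at least `j`
at `Q`, so that `dim |D|(-jQ) = h⁰(D - jQ)`; the sum is truncated at
`j = deg D` since `h⁰(D - jQ) = 0` for `j > deg D`. -/
def wt (D : C.Point →₀ ℤ) (Q : C.Point) : ℤ :=
  (∑ j ∈ Finset.Icc 1 (C.deg D).toNat, (C.h0 (D - (j : ℤ) • C.pt Q) : ℤ))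
    - ((C.h0 D : ℤ) - 1) * (C.h0 D : ℤ) / 2

/-- `Q` is a ramification point of the complete linear system `|D|`. -/
def IsRamPt (D : C.Point →₀ ℤ) (Q : C.Point) : Prop := 0 < C.wt D Q

/-- The Weierstrass weight of `P`: its weight in the canonical system
`H⁰(C, ω_C)`. -/
def wW (P : C.Point) : ℤ := C.wt C.K P

/-- `P` is a Weierstrass point of `C`. -/
def IsWeierstrass (P : C.Point) : Prop := 0 < C.wW P

/-- The divisor `K + (i+1)P` of the line bundle `ω_C((i+1)P)`, whose complete
linear system is `V_C(i,P) = H⁰(C, ω_C((i+1)P))`. -/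
def VDiv (i : ℕ) (P : C.Point) : C.Point →₀ ℤ := C.K + ((i : ℤ) + 1) • C.pt P

end SmoothProjCurve

namespace SmoothProjCurve

variable (C : SmoothProjCurve)

lemma deg_def (D : C.Point →₀ ℤ) : C.deg D = D.sum fun _ n => n := rfl

lemma deg_add' (D E : C.Point →₀ ℤ) : C.deg (D + E) = C.deg D + C.deg E := by
  simp [deg, Finsupp.sum_add_index']

lemma deg_single' (P : C.Point) (k : ℤ) : C.deg (Finsupp.single P k) = k := by
  simp [deg, Finsupp.sum_single_index]

lemma deg_smul_pt (k : ℤ) (P : C.Point) : C.deg (k • C.pt P) = k := by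
  rw [pt, Finsupp.smul_single, smul_eq_mul, mul_one, deg_single']

lemma deg_pt (P : C.Point) : C.deg (C.pt P) = 1 := by
  simpa [pt] using C.deg_single' P 1

lemma deg_K : C.deg C.K = 2 * (C.genus : ℤ) - 2 := by
  have h := C.riemann_roch C.K
  rw [C.h0_canonical, sub_self, C.h0_trivial, ← C.deg_def] at h
  omega

lemma h0_K_add_smul (P : C.Point) (k : ℤ) (hk : 1 ≤ k) :
    (C.h0 (C.K + k • C.pt P) : ℤ) = (C.genus : ℤ) + k - 1 := by
  have h := C.riemann_roch (C.K + k • C.pt P)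
  rw [← C.deg_def] at h
  have hKD : C.K - (C.K + k • C.pt P) = (-k) • C.pt P := by
    rw [neg_smul]; abel
  have hneg : C.h0 (C.K - (C.K + k • C.pt P)) = 0 := by
    apply C.h0_of_neg
    rw [hKD, ← C.deg_def, C.deg_smul_pt]
    omega
  rw [hneg, C.deg_add', C.deg_K, C.deg_smul_pt] at h
  omega

lemma sum_shift (D : C.Point →₀ ℤ) (Q : C.Point) (n : ℕ) :
    ∑ j ∈ Finset.Icc 1 (n + 1), (C.h0 (D + C.pt Q - (j : ℤ) • C.pt Q) : ℤ)
      = (C.h0 D : ℤ) + ∑ j ∈ Finset.Icc 1 n, (C.h0 (D - (j : ℤ) • C.pt Q) : ℤ) := by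
  induction n with
  | zero => simp
  | succ n ih =>
    rw [Finset.sum_Icc_succ_top (by omega : (1:ℕ) ≤ n + 1 + 1), ih,
      Finset.sum_Icc_succ_top (by omega : (1:ℕ) ≤ n + 1)]
    have e : D + C.pt Q - ((n + 1 + 1 : ℕ) : ℤ) • C.pt Q
        = D - ((n + 1 : ℕ) : ℤ) • C.pt Q := by
      push_cast
      rw [add_smul, one_smul]
      abel
    rw [e]
    ring

lemma tri_arith (a S : ℤ) : a + S - (a + 1 - 1) * (a + 1) / 2 = S - (a - 1) * a / 2 := by
  have e : (a + 1 - 1) * (a + 1) = (a - 1) * a + a * 2 := by ring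
  rw [e, Int.add_mul_ediv_right _ _ (by norm_num : (2:ℤ) ≠ 0)]
  ring

lemma toNat_deg_add_pt (D : C.Point →₀ ℤ) (Q : C.Point) (hd : 0 ≤ C.deg D) :
    (C.deg (D + C.pt Q)).toNat = (C.deg D).toNat + 1 := by
  rw [C.deg_add', C.deg_pt]
  omega

lemma wt_add_pt_of_h0_eq (D : C.Point →₀ ℤ) (Q : C.Point) (hd : 0 ≤ C.deg D)
    (h : C.h0 (D + C.pt Q) = C.h0 D) :
    C.wt (D + C.pt Q) Q = (C.h0 D : ℤ) + C.wt D Q := by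
  unfold wt
  rw [C.toNat_deg_add_pt D Q hd, C.sum_shift, h]
  ring

lemma wt_add_pt_of_h0_succ (D : C.Point →₀ ℤ) (Q : C.Point) (hd : 0 ≤ C.deg D)
    (h : C.h0 (D + C.pt Q) = C.h0 D + 1) :
    C.wt (D + C.pt Q) Q = C.wt D Q := by
  unfold wt
  rw [C.toNat_deg_add_pt D Q hd, C.sum_shift, h]
  push_cast
  exact tri_arith _ _

lemma wW_of_genus_zero (P : C.Point) (hg : C.genus = 0) : C.wW P = 0 := by
  unfold wW wt
  have hK : (C.deg C.K).toNat = 0 := by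
    have := C.deg_K
    omega
  rw [hK, C.h0_canonical, hg]
  simp

lemma h0_VDiv (i : ℕ) (P : C.Point) :
    (C.h0 (C.VDiv i P) : ℤ) = (C.genus : ℤ) + i := by
  have := C.h0_K_add_smul P ((i : ℤ) + 1) (by omega)
  unfold VDiv
  omega

lemma deg_VDiv (i : ℕ) (P : C.Point) :
    C.deg (C.VDiv i P) = 2 * (C.genus : ℤ) - 1 + i := by
  unfold VDiv
  rw [C.deg_add', C.deg_K, C.deg_smul_pt]
  ring

lemma VDiv_succ (i : ℕ) (P : C.Point) :
    C.VDiv (i + 1) P = C.VDiv i P + C.pt P := by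
  unfold VDiv
  push_cast
  rw [add_smul, one_smul]
  abel

end SmoothProjCurve


/-- Proposition 2.2(1) of the paper.
Let `C` be a smooth projective connected curve of genus `g` over `ℂ`, `i ≥ 0`
an integer and `P` a point of `C`.  Let `V = H⁰(C, ω_C((i+1)P))` be the
complete linear system of sections of `ω_C((i+1)P)`.  Then the weight of `P`
as a ramification point of `V` equals `g + wt(P)`, where `wt(P)` is the
Weierstrass weight of `P`. -/
theorem weight_at_center_eq_genus_add_weierstrass_weight
    (C : SmoothProjCurve) (i : ℕ) (P : C.Point) :
    C.wt (C.VDiv i P) P = (C.genus : ℤ) + C.wW P := by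
  induction i with
  | zero =>
    by_cases hg : C.genus = 0
    · have h0' : C.h0 (C.VDiv 0 P) = 0 := by
        have := C.h0_VDiv 0 P
        omega
      have hdeg : (C.deg (C.VDiv 0 P)).toNat = 0 := by
        have := C.deg_VDiv 0 P
        omega
      rw [C.wW_of_genus_zero P hg, hg]
      unfold SmoothProjCurve.wt
      rw [hdeg, h0']
      simp
    · have hK : C.VDiv 0 P = C.K + C.pt P := by
        unfold SmoothProjCurve.VDiv
        norm_num
      have hh : C.h0 (C.K + C.pt P) = C.h0 C.K := by
        have h1 := C.h0_K_add_smul P 1 le_rfl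
        rw [one_smul] at h1
        rw [C.h0_canonical]
        omega
      rw [hK, C.wt_add_pt_of_h0_eq C.K P (by have := C.deg_K; omega) hh, C.h0_canonical]
      rfl
  | succ i ih =>
    by_cases h : 2 * C.genus + i = 0
    · have hg : C.genus = 0 := by omega
      have hi : i = 0 := by omega
      subst hi
      rw [C.wW_of_genus_zero P hg, hg]
      have hdeg : (C.deg (C.VDiv 1 P)).toNat = 0 := by
        have := C.deg_VDiv 1 P
        omega
      have hh' : C.h0 (C.VDiv 1 P) = 1 := by
        have := C.h0_VDiv 1 P
        omega
      unfold SmoothProjCurve.wt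
      rw [hdeg, hh']
      simp
    · have hd : 0 ≤ C.deg (C.VDiv i P) := by
        rw [C.deg_VDiv]
        omega
      have hh : C.h0 (C.VDiv i P + C.pt P) = C.h0 (C.VDiv i P) + 1 := by
        have h1 := C.h0_VDiv i P
        have h2 := C.h0_VDiv (i + 1) P
        rw [C.VDiv_succ] at h2
        push_cast at h2
        omega
      rw [C.VDiv_succ, C.wt_add_pt_of_h0_succ _ _ hd hh, ih]
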